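/- Adopt the standing setup: Λ a connected row-finite k-graph with no sources, c : Λ → G a cocycle, H_n a descending chain of finite-index normal subgroups with H_1 = G, G_n = G/H_n, c_n(λ) = c(λ)H_n, Λ_n = Λ ×_{c_n} G_n and coverings p_n(λ, g) = (λ, q_n(g)). Then the tower (k+1)-graph T = tgrphlim(Λ_n; p_n) is cofinal if and only if each of the k-graphs Λ_n is cofinal. -/

import Mathlib

open CategoryTheory

attribute [local instance 2000] Preorder.smallCategory

/-- A `k`-graph: a small category `Λ` equipped with a degree functor `d : Λ → ℕᵏ`
satisfying the unique factorisation property.  Morphisms point from the range of a path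
to its source, so that `f ≫ g` corresponds to the composition `fg` of paths in the
`k`-graph literature (with `r (f ≫ g) = r f` and `s (f ≫ g) = s g`). -/
structure KGraph (k : ℕ) (Λ : Type) [SmallCategory Λ] : Type where
  deg : ∀ {a b : Λ}, (a ⟶ b) → Fin k → ℕ
  deg_id : ∀ a : Λ, deg (𝟙 a) = 0
  deg_comp : ∀ {a b c : Λ} (f : a ⟶ b) (g : b ⟶ c), deg (f ≫ g) = deg f + deg g
  factor : ∀ {a b : Λ} (f : a ⟶ b) (m n : Fin k → ℕ), deg f = m + n →
    ∃! t : Σ c : Λ, (a ⟶ c) × (c ⟶ b),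
      deg t.2.1 = m ∧ deg t.2.2 = n ∧ t.2.1 ≫ t.2.2 = f

/-- An infinite path in a `k`-graph: a degree-preserving functor `Ω_k → Λ`, where `Ω_k`
is realised as the preorder category on `ℕᵏ = Fin k → ℕ`; the morphism `(p, q)` (for
`p ≤ q`) is `homOfLE h : p ⟶ q` and must be sent to a path of degree `q - p`.
The range of the path is `P.obj 0`. -/
structure InfPath {k : ℕ} {Λ : Type} [SmallCategory Λ] (KG : KGraph k Λ) : Type where
  P : (Fin k → ℕ) ⥤ Λ
  deg_eq : ∀ {p q : Fin k → ℕ} (h : p ≤ q), KG.deg (P.map (homOfLE h)) = q - p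

/-- Translation by `n` on `ℕᵏ`, as a functor. -/
def transFunctor (k : ℕ) (n : Fin k → ℕ) : (Fin k → ℕ) ⥤ (Fin k → ℕ) where
  obj p := p + n
  map f := homOfLE (add_le_add (leOfHom f) (le_refl n))
  map_id _ := rfl
  map_comp _ _ := rfl

/-- The shift `σⁿ x` of an infinite path `x`, satisfying `σⁿ x (p, q) = x (p + n, q + n)`. -/
def InfPath.shift {k : ℕ} {Λ : Type} [SmallCategory Λ] {KG : KGraph k Λ}
    (x : InfPath KG) (n : Fin k → ℕ) : InfPath KG where
  P := transFunctor k n ⋙ x.P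
  deg_eq {p q} h := by
    have h1 : (transFunctor k n ⋙ x.P).map (homOfLE h)
        = x.P.map (homOfLE (add_le_add h (le_refl n))) := rfl
    rw [h1]
    refine (x.deg_eq _).trans ?_
    funext i
    simp only [Pi.sub_apply, Pi.add_apply]
    omega

/-- A cocycle on a `k`-graph: a functor `c : Λ → G` into a group `G` (viewed as a category
with one object).  With our orientation of arrows, `c (f ≫ g) = c f * c g`. -/
structure Cocycle (Λ : Type) [SmallCategory Λ] (G : Type) [Group G] : Type where
  c : ∀ {a b : Λ}, (a ⟶ b) → G
  map_id : ∀ a : Λ, c (𝟙 a) = 1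
  map_comp : ∀ {a b d : Λ} (f : a ⟶ b) (g : b ⟶ d), c (f ≫ g) = c f * c g

/-- The skew product `Λ ×_c G`: vertices are pairs `(v, g)`, and `(λ, g)` is a path with
source `(s λ, g)` and range `(r λ, c(λ) g)`.  Here a morphism from `(a, h)` to `(b, g)` is
a path `f : a ⟶ b` with `c f * g = h`. -/
structure Skew {Λ : Type} [SmallCategory Λ] {G : Type} [Group G] (σ : Cocycle Λ G) : Type where
  base : Λ
  grp : G

instance Skew.instCategory {Λ : Type} [SmallCategory Λ] {G : Type} [Group G]
    (σ : Cocycle Λ G) : SmallCategory (Skew σ) where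
  Hom a b := {f : a.base ⟶ b.base // σ.c f * b.grp = a.grp}
  id a := ⟨𝟙 a.base, by rw [σ.map_id, one_mul]⟩
  comp f g := ⟨f.1 ≫ g.1, by rw [σ.map_comp, mul_assoc, g.2, f.2]⟩
  id_comp f := by apply Subtype.ext; exact Category.id_comp f.1
  comp_id f := by apply Subtype.ext; exact Category.comp_id f.1
  assoc f g h := by apply Subtype.ext; exact Category.assoc f.1 g.1 h.1

/-- The `k`-graph structure on the skew product `Λ ×_c G`. -/
def skewKGraph {k : ℕ} {Λ : Type} [SmallCategory Λ] (KG : KGraph k Λ) {G : Type} [Group G]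
    (σ : Cocycle Λ G) : KGraph k (Skew σ) where
  deg f := KG.deg f.1
  deg_id a := KG.deg_id a.base
  deg_comp f g := KG.deg_comp f.1 g.1
  factor := by
    rintro a b f m n hmn
    obtain ⟨⟨c0, g0, h0⟩, ⟨hgm, hhn, hgh⟩, huniq⟩ := KG.factor f.1 m n hmn
    refine ⟨⟨⟨c0, (σ.c g0)⁻¹ * a.grp⟩, ⟨g0, mul_inv_cancel_left _ _⟩, ⟨h0, ?_⟩⟩,
      ⟨hgm, hhn, Subtype.ext hgh⟩, ?_⟩
    · rw [← f.2, ← hgh, σ.map_comp, mul_assoc, inv_mul_cancel_left]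
    · rintro ⟨⟨c1, x1⟩, ⟨g1, hg1⟩, ⟨h1, hh1⟩⟩ ⟨hm1, hn1, hcomp1⟩
      have hbase : (⟨c0, g0, h0⟩ : Σ c : Λ, (a.base ⟶ c) × (c ⟶ b.base)) = ⟨c1, g1, h1⟩ :=
        (huniq ⟨c1, g1, h1⟩ ⟨hm1, hn1, congrArg Subtype.val hcomp1⟩).symm
      obtain ⟨h1', h2'⟩ := Sigma.mk.inj_iff.mp hbase
      subst h1'
      obtain ⟨h3', h4'⟩ := Prod.mk.inj (eq_of_heq h2')
      subst h3'
      subst h4'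
      have hx : x1 = (σ.c g0)⁻¹ * a.grp := by rw [← hg1, inv_mul_cancel_left]
      subst hx
      rfl

/-- For `m ≤ n` and a descending chain `H` of normal subgroups, the canonical map
`G/Hₙ → G/Hₘ` (the map `q_{m,n}` induced by the projections `qᵢ`). -/
def quotDown {G : Type} [Group G] {H : ℕ → Subgroup G} [∀ i, (H i).Normal]
    (hH : Antitone H) {m n : ℕ} (h : m ≤ n) : G ⧸ H n →* G ⧸ H m :=
  QuotientGroup.map _ _ (MonoidHom.id G) (fun _ hx => hH h hx)

lemma quotDown_mk {G : Type} [Group G] {H : ℕ → Subgroup G} [∀ i, (H i).Normal]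
    (hH : Antitone H) {m n : ℕ} (h : m ≤ n) (g : G) :
    quotDown hH h (g : G ⧸ H n) = (g : G ⧸ H m) := rfl

lemma quotDown_refl {G : Type} [Group G] {H : ℕ → Subgroup G} [∀ i, (H i).Normal]
    (hH : Antitone H) (n : ℕ) (z : G ⧸ H n) : quotDown hH (le_refl n) z = z := by
  induction z using QuotientGroup.induction_on with
  | _ g => rfl

lemma quotDown_comp {G : Type} [Group G] {H : ℕ → Subgroup G} [∀ i, (H i).Normal]
    (hH : Antitone H) {l m n : ℕ} (h1 : l ≤ m) (h2 : m ≤ n) (z : G ⧸ H n) :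
    quotDown hH h1 (quotDown hH h2 z) = quotDown hH (h1.trans h2) z := by
  induction z using QuotientGroup.induction_on with
  | _ g => rfl

/-- Total version of `quotDown` (junk value `1` when `m > n`). -/
def qd {G : Type} [Group G] {H : ℕ → Subgroup G} [∀ i, (H i).Normal]
    (hH : Antitone H) (m n : ℕ) (z : G ⧸ H n) : G ⧸ H m :=
  if h : m ≤ n then quotDown hH h z else 1

/-- The tower `(k+1)`-graph `T = tgrphlim (Λₙ; pₙ)` of [KPS] for the system of
skew-product coverings `pₙ : Λ ×_{c_{n+1}} G/H_{n+1} → Λ ×_{c_n} G/Hₙ`.  Its vertices are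
the disjoint union of the vertices `(v, gHₙ)` of the skew products `Λₙ = Λ ×_{c_n} G/Hₙ`;
a morphism of degree `(m, j)` from a level-`n` vertex is a path `λ ∈ Λₙ^m` together with a
vertex `w` of `Λ_{n+j}` lying over its source.  (Here such a morphism from `(n, v, g)` to
`(n', v', g')` is encoded as a path `f : v ⟶ v'` of `Λ` such that `n ≤ n'` and
`c_n(f)·q_{n,n'}(g') = g` in `G/Hₙ`.) -/
structure TObj {Λ : Type} [SmallCategory Λ] {G : Type} [Group G] {H : ℕ → Subgroup G}
    [∀ i, (H i).Normal] (c : Cocycle Λ G) (hH : Antitone H) : Type where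
  lvl : ℕ
  vert : Λ
  grp : G ⧸ H lvl

instance TObj.instCategory {Λ : Type} [SmallCategory Λ] {G : Type} [Group G]
    {H : ℕ → Subgroup G} [∀ i, (H i).Normal] (c : Cocycle Λ G) (hH : Antitone H) :
    SmallCategory (TObj c hH) where
  Hom a b := {f : a.vert ⟶ b.vert //
    a.lvl ≤ b.lvl ∧ (↑(c.c f) : G ⧸ H a.lvl) * qd hH a.lvl b.lvl b.grp = a.grp}
  id a := ⟨𝟙 a.vert, le_rfl, by
    rw [c.map_id, qd, dif_pos le_rfl, quotDown_refl]
    exact one_mul a.grp⟩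
  comp {a b c'} f g := ⟨f.1 ≫ g.1, f.2.1.trans g.2.1, by
    obtain ⟨hab, hf⟩ := f.2
    obtain ⟨hbc, hg⟩ := g.2
    simp only [qd, dif_pos hbc] at hg
    simp only [qd, dif_pos hab] at hf
    simp only [qd, dif_pos (hab.trans hbc)]
    have h1 := congrArg (quotDown hH hab) hg
    rw [map_mul, quotDown_mk, quotDown_comp] at h1
    rw [c.map_comp]
    calc (↑(c.c f.1 * c.c g.1) : G ⧸ H a.lvl) * quotDown hH (hab.trans hbc) c'.grp
        = ↑(c.c f.1) * (↑(c.c g.1) * quotDown hH (hab.trans hbc) c'.grp) := by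
          rw [QuotientGroup.mk_mul, mul_assoc]
      _ = ↑(c.c f.1) * quotDown hH hab b.grp := by rw [h1]
      _ = a.grp := hf⟩
  id_comp f := by apply Subtype.ext; exact Category.id_comp f.1
  comp_id f := by apply Subtype.ext; exact Category.comp_id f.1
  assoc f g h := by apply Subtype.ext; exact Category.assoc f.1 g.1 h.1

/-- The `(k+1)`-graph structure on the tower graph: the degree of a morphism is
`(d(λ), j)` where `j` is the level difference. -/
def towerKG {k : ℕ} {Λ : Type} [SmallCategory Λ] (KG : KGraph k Λ) {G : Type} [Group G]
    {H : ℕ → Subgroup G} [∀ i, (H i).Normal] (c : Cocycle Λ G) (hH : Antitone H) :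
    KGraph (k + 1) (TObj c hH) where
  deg {a b} f := Fin.snoc (KG.deg f.1) (b.lvl - a.lvl)
  deg_id a := by
    funext i
    refine Fin.lastCases ?_ (fun i => ?_) i
    · simp [Fin.snoc]
    · have h0 : (𝟙 a : a ⟶ a).1 = 𝟙 a.vert := rfl
      have : KG.deg (𝟙 a.vert) = 0 := KG.deg_id a.vert
      simp [Fin.snoc, h0, this]
  deg_comp {a b c'} f g := by
    funext i
    refine Fin.lastCases ?_ (fun i => ?_) i
    · have h1 := f.2.1
      have h2 := g.2.1
      simp only [Fin.snoc_last, Pi.add_apply]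
      omega
    · have h0 : (f ≫ g : a ⟶ c').1 = f.1 ≫ g.1 := rfl
      have : KG.deg (f.1 ≫ g.1) = KG.deg f.1 + KG.deg g.1 := KG.deg_comp f.1 g.1
      simp [Fin.snoc, h0, this]
  factor := by
    rintro a b f m n hmn
    have hble := f.2.1
    have hcond := f.2.2
    have hhead : KG.deg f.1 = (fun i => m (Fin.castSucc i)) + (fun i => n (Fin.castSucc i)) := by
      funext i
      have h := congrFun hmn (Fin.castSucc i)
      simpa [Fin.snoc] using h
    have hlast : b.lvl - a.lvl = m (Fin.last k) + n (Fin.last k) := by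
      have h := congrFun hmn (Fin.last k)
      simpa [Fin.snoc] using h
    obtain ⟨⟨c0, g0, h0⟩, ⟨hg, hh, hgh⟩, uniq⟩ :=
      KG.factor f.1 (fun i => m (Fin.castSucc i)) (fun i => n (Fin.castSucc i)) hhead
    have hmidle : a.lvl + m (Fin.last k) ≤ b.lvl := by omega
    refine ⟨⟨⟨a.lvl + m (Fin.last k), c0,
        ↑(c.c h0) * qd hH (a.lvl + m (Fin.last k)) b.lvl b.grp⟩,
        ⟨g0, Nat.le_add_right _ _, ?_⟩, ⟨h0, hmidle, rfl⟩⟩,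
      ⟨?_, ?_, Subtype.ext hgh⟩, ?_⟩
    · simp only [qd, dif_pos (Nat.le_add_right a.lvl (m (Fin.last k))), dif_pos hmidle,
        dif_pos hble]
      rw [map_mul, quotDown_mk, quotDown_comp]
      rw [← mul_assoc, ← QuotientGroup.mk_mul, ← c.map_comp, hgh]
      simp only [qd, dif_pos hble] at hcond
      exact hcond
    · funext i
      refine Fin.lastCases ?_ (fun i => ?_) i
      · simp only [Fin.snoc_last]
        omega
      · have h := congrFun hg i
        simpa [Fin.snoc] using h
    · funext i
      refine Fin.lastCases ?_ (fun i => ?_) i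
      · simp only [Fin.snoc_last]
        omega
      · have h := congrFun hh i
        simpa [Fin.snoc] using h
    · rintro ⟨⟨L, V, Z⟩, ⟨g1, hle1, hc1⟩, ⟨h1, hle2, hc2⟩⟩ ⟨dm, dn, dcomp⟩
      dsimp only at hle1 hle2 hc1 hc2 dm dn
      have hcompval : g1 ≫ h1 = f.1 := congrArg Subtype.val dcomp
      have hdg1 : KG.deg g1 = fun i => m (Fin.castSucc i) := by
        funext i
        have h := congrFun dm (Fin.castSucc i)
        simpa [Fin.snoc] using h
      have hdh1 : KG.deg h1 = fun i => n (Fin.castSucc i) := by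
        funext i
        have h := congrFun dn (Fin.castSucc i)
        simpa [Fin.snoc] using h
      have hLm : L - a.lvl = m (Fin.last k) := by
        have h := congrFun dm (Fin.last k)
        simpa [Fin.snoc] using h
      have hL : L = a.lvl + m (Fin.last k) := by omega
      subst hL
      have hbase : (⟨c0, g0, h0⟩ : Σ c' : Λ, (a.vert ⟶ c') × (c' ⟶ b.vert)) = ⟨V, g1, h1⟩ :=
        (uniq ⟨V, g1, h1⟩ ⟨hdg1, hdh1, hcompval⟩).symm
      obtain ⟨h1', h2'⟩ := Sigma.mk.inj_iff.mp hbase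
      subst h1'
      obtain ⟨h3', h4'⟩ := Prod.mk.inj (eq_of_heq h2')
      subst h3'
      subst h4'
      have hZ : Z = ↑(c.c h0) * qd hH (a.lvl + m (Fin.last k)) b.lvl b.grp := hc2.symm
      subst hZ
      rfl

/-- The induced cocycle `c_N : Λ → G/N`, `c_N(λ) = c(λ)N`. -/
def cq {Λ : Type} [SmallCategory Λ] {G : Type} [Group G] (c : Cocycle Λ G)
    (N : Subgroup G) [N.Normal] : Cocycle Λ (G ⧸ N) where
  c f := ↑(c.c f)
  map_id a := by
    show ((c.c (𝟙 a) : G) : G ⧸ N) = 1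
    rw [c.map_id]; rfl
  map_comp f g := by
    show ((c.c (f ≫ g) : G) : G ⧸ N) = ↑(c.c f) * ↑(c.c g)
    rw [c.map_comp]; rfl

/-- A row-finite `k`-graph with no sources is cofinal if for every vertex `v` and every
infinite path `x` there is `n ∈ ℕᵏ` with `vΛx(n) ≠ ∅`. -/
def Cofinal {k : ℕ} {Λ : Type} [SmallCategory Λ] (KG : KGraph k Λ) : Prop :=
  ∀ (v : Λ) (x : InfPath KG), ∃ n : Fin k → ℕ, Nonempty (v ⟶ x.P.obj n)

section Stmt13Aux

variable {k : ℕ} {Λ : Type} [SmallCategory Λ] {G : Type} [Group G]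
  {H : ℕ → Subgroup G} [∀ i, (H i).Normal]

lemma qd_eq (hH : Antitone H) {m n : ℕ} (h : m ≤ n) (z : G ⧸ H n) :
    qd hH m n z = quotDown hH h z := dif_pos h

lemma qd_push (hH : Antitone H) {N a b : ℕ} (hNa : N ≤ a) (hab : a ≤ b)
    (u w : G ⧸ H a) (z : G ⧸ H b) (h : u * qd hH a b z = w) :
    quotDown hH hNa u * quotDown hH (hNa.trans hab) z = quotDown hH hNa w := by
  rw [qd_eq hH hab] at h
  have h2 := congrArg (quotDown hH hNa) h
  rw [map_mul, quotDown_comp] at h2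
  exact h2

lemma snoc_le {p q : Fin k → ℕ} {j j' : ℕ} (hpq : p ≤ q) (hj : j ≤ j') :
    (Fin.snoc p j : Fin (k + 1) → ℕ) ≤ (Fin.snoc q j' : Fin (k + 1) → ℕ) := fun i => by
  refine Fin.lastCases ?_ (fun i => ?_) i
  · simpa using hj
  · simpa using hpq i

/-- Chosen lift to `G` of the group components of an infinite path in a skew product. -/
def ghat (KG : KGraph k Λ) (c : Cocycle Λ G) (n : ℕ)
    (x : InfPath (skewKGraph KG (cq c (H n)))) (g0 : G) (p : Fin k → ℕ) : G :=
  (c.c (x.P.map (homOfLE (show (0 : Fin k → ℕ) ≤ p from fun i => Nat.zero_le _))).val)⁻¹ * g0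

lemma ghat_mk (KG : KGraph k Λ) (c : Cocycle Λ G) (n : ℕ)
    (x : InfPath (skewKGraph KG (cq c (H n)))) (g0 : G)
    (hg0 : ((g0 : G) : G ⧸ H n) = (x.P.obj 0).grp) (p : Fin k → ℕ) :
    ((ghat KG c n x g0 p : G) : G ⧸ H n) = (x.P.obj p).grp := by
  have h0p : (0 : Fin k → ℕ) ≤ p := fun i => Nat.zero_le _
  have h2 := (x.P.map (homOfLE h0p)).2
  -- h2 : ↑(c.c f) * (x.P.obj p).grp = (x.P.obj 0).grp
  apply mul_left_cancel (a := (↑(c.c (x.P.map (homOfLE h0p)).val) : G ⧸ H n))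
  rw [← QuotientGroup.mk_mul, ghat, mul_inv_cancel_left, hg0]
  exact h2.symm

lemma ghat_comp (KG : KGraph k Λ) (c : Cocycle Λ G) (n : ℕ)
    (x : InfPath (skewKGraph KG (cq c (H n)))) (g0 : G) {p q : Fin k → ℕ} (h : p ≤ q) :
    c.c ((x.P.map (homOfLE h)).val) * ghat KG c n x g0 q = ghat KG c n x g0 p := by
  have h0p : (0 : Fin k → ℕ) ≤ p := fun i => Nat.zero_le _
  have h0q : (0 : Fin k → ℕ) ≤ q := fun i => Nat.zero_le _
  have key : x.P.map (homOfLE h0q) = x.P.map (homOfLE h0p) ≫ x.P.map (homOfLE h) := by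
    rw [← x.P.map_comp]; rfl
  have keyv : (x.P.map (homOfLE h0q)).val
      = (x.P.map (homOfLE h0p)).val ≫ (x.P.map (homOfLE h)).val :=
    congrArg Subtype.val key
  rw [ghat, ghat, keyv, c.map_comp, mul_inv_rev, ← mul_assoc, ← mul_assoc,
    mul_inv_cancel, one_mul]

/-- Lift of an infinite path in `Λ_n` to an infinite path in the tower graph. -/
def towerPath (KG : KGraph k Λ) (c : Cocycle Λ G) (hH : Antitone H) (n : ℕ)
    (x : InfPath (skewKGraph KG (cq c (H n)))) (g0 : G) :
    InfPath (towerKG KG c hH) where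
  P :=
    { obj := fun P => ⟨n + P (Fin.last k), (x.P.obj (fun i => P i.castSucc)).base,
        ((ghat KG c n x g0 (fun i => P i.castSucc) : G) : G ⧸ H (n + P (Fin.last k)))⟩
      map := fun {P Q} F =>
        ⟨(x.P.map (homOfLE (fun i => leOfHom F i.castSucc))).val,
          Nat.add_le_add_left (leOfHom F (Fin.last k)) n, by
            rw [qd_eq hH (Nat.add_le_add_left (leOfHom F (Fin.last k)) n), quotDown_mk,
              ← QuotientGroup.mk_mul, ghat_comp]⟩
      map_id := fun P => by
        have h1 : x.P.map (homOfLE (fun i => leOfHom (𝟙 P) i.castSucc))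
            = 𝟙 (x.P.obj fun i => P i.castSucc) := by
          rw [← x.P.map_id]; rfl
        apply Subtype.ext
        have h2 := congrArg Subtype.val h1
        exact h2
      map_comp := fun {P Q R} F1 F2 => by
        have h1 : x.P.map (homOfLE (fun i => leOfHom (F1 ≫ F2) i.castSucc))
            = x.P.map (homOfLE (fun i => leOfHom F1 i.castSucc))
              ≫ x.P.map (homOfLE (fun i => leOfHom F2 i.castSucc)) := by
          rw [← x.P.map_comp]; rfl
        apply Subtype.ext
        have h2 := congrArg Subtype.val h1
        exact h2 }
  deg_eq := by
    intro P Q h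
    have hf : (fun i : Fin k => P i.castSucc) ≤ (fun i => Q i.castSucc) :=
      fun i => h i.castSucc
    have hdeg : KG.deg (x.P.map (homOfLE hf)).val
        = (fun i => Q i.castSucc) - (fun i => P i.castSucc) := x.deg_eq hf
    show (Fin.snoc (KG.deg (x.P.map (homOfLE hf)).val)
        ((n + Q (Fin.last k)) - (n + P (Fin.last k))) : Fin (k + 1) → ℕ) = Q - P
    funext i
    refine Fin.lastCases ?_ (fun i => ?_) i
    · rw [Fin.snoc_last]
      simp only [Pi.sub_apply]
      omega
    · rw [Fin.snoc_castSucc, hdeg]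
      simp only [Pi.sub_apply]

lemma tower_lvl (KG : KGraph k Λ) (c : Cocycle Λ G) (hH : Antitone H)
    (X : InfPath (towerKG KG c hH)) (P : Fin (k + 1) → ℕ) :
    (X.P.obj P).lvl = (X.P.obj 0).lvl + P (Fin.last k) := by
  have h0 : (0 : Fin (k + 1) → ℕ) ≤ P := fun i => Nat.zero_le _
  have hle := (X.P.map (homOfLE h0)).2.1
  have hdeg := congrFun (X.deg_eq h0) (Fin.last k)
  have hrfl : (towerKG KG c hH).deg (X.P.map (homOfLE h0))
      = Fin.snoc (KG.deg (X.P.map (homOfLE h0)).val)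
        ((X.P.obj P).lvl - (X.P.obj 0).lvl) := rfl
  rw [hrfl, Fin.snoc_last] at hdeg
  simp only [Pi.sub_apply, Pi.zero_apply] at hdeg
  omega

/-- Restriction of an infinite tower path to a horizontal infinite path at level
`(X.P.obj 0).lvl + j0`. -/
def skewPath (KG : KGraph k Λ) (c : Cocycle Λ G) (hH : Antitone H)
    (X : InfPath (towerKG KG c hH)) (j0 : ℕ) :
    InfPath (skewKGraph KG (cq c (H ((X.P.obj 0).lvl + j0)))) where
  P :=
    { obj := fun p => ⟨(X.P.obj (Fin.snoc p j0)).vert,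
        qd hH ((X.P.obj 0).lvl + j0) (X.P.obj (Fin.snoc p j0)).lvl
          (X.P.obj (Fin.snoc p j0)).grp⟩
      map := fun {p q} F => by
        refine ⟨(X.P.map (homOfLE (snoc_le (leOfHom F) le_rfl))).val, ?_⟩
        have hNa : (X.P.obj 0).lvl + j0 ≤ (X.P.obj (Fin.snoc p j0)).lvl := by
          rw [tower_lvl KG c hH X (Fin.snoc p j0), Fin.snoc_last]
        have hNb : (X.P.obj 0).lvl + j0 ≤ (X.P.obj (Fin.snoc q j0)).lvl := by
          rw [tower_lvl KG c hH X (Fin.snoc q j0), Fin.snoc_last]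
        have h1 := (X.P.map (homOfLE (snoc_le (p := p) (q := q) (leOfHom F)
          (le_refl j0)))).2.1
        have h2 := (X.P.map (homOfLE (snoc_le (p := p) (q := q) (leOfHom F)
          (le_refl j0)))).2.2
        have h3 := qd_push hH hNa h1 _ _ _ h2
        rw [quotDown_mk] at h3
        show (↑(c.c (X.P.map (homOfLE (snoc_le (p := p) (q := q) (leOfHom F)
              (le_refl j0)))).val) : G ⧸ H ((X.P.obj 0).lvl + j0)) *
            qd hH ((X.P.obj 0).lvl + j0) (X.P.obj (Fin.snoc q j0)).lvl
              (X.P.obj (Fin.snoc q j0)).grp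
          = qd hH ((X.P.obj 0).lvl + j0) (X.P.obj (Fin.snoc p j0)).lvl
              (X.P.obj (Fin.snoc p j0)).grp
        rw [qd_eq hH hNb, qd_eq hH hNa]
        exact h3
      map_id := fun p => by
        have h1 : X.P.map (homOfLE (snoc_le (p := p) (q := p) (leOfHom (𝟙 p)) (le_refl j0)))
            = 𝟙 (X.P.obj (Fin.snoc p j0)) := by
          rw [← X.P.map_id]; rfl
        apply Subtype.ext
        have h2 := congrArg Subtype.val h1
        exact h2
      map_comp := fun {p q r} F1 F2 => by
        have h1 : X.P.map (homOfLE (snoc_le (p := p) (q := r) (leOfHom (F1 ≫ F2))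
              (le_refl j0)))
            = X.P.map (homOfLE (snoc_le (p := p) (q := q) (leOfHom F1) (le_refl j0)))
              ≫ X.P.map (homOfLE (snoc_le (p := q) (q := r) (leOfHom F2) (le_refl j0))) := by
          rw [← X.P.map_comp]; rfl
        apply Subtype.ext
        have h2 := congrArg Subtype.val h1
        exact h2 }
  deg_eq := by
    intro p q h
    have hdeg := X.deg_eq (snoc_le h (le_rfl : j0 ≤ j0))
    funext i
    have hc := congrFun hdeg (Fin.castSucc i)
    have hrfl : (towerKG KG c hH).deg (X.P.map (homOfLE (snoc_le h le_rfl)))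
        = Fin.snoc (KG.deg (X.P.map (homOfLE (snoc_le h le_rfl))).val)
          ((X.P.obj (Fin.snoc q j0)).lvl - (X.P.obj (Fin.snoc p j0)).lvl) := rfl
    rw [hrfl, Fin.snoc_castSucc] at hc
    show KG.deg (X.P.map (homOfLE (snoc_le h le_rfl))).val i = _
    rw [hc]
    simp only [Pi.sub_apply, Fin.snoc_castSucc]

end Stmt13Aux

/-- Standing setup: `Λ` a connected row-finite `k`-graph with no sources,
`c : Λ → G` a cocycle, `(Hₙ)` a descending chain of finite-index normal subgroups with
`H₀ = G`, `Gₙ = G/Hₙ`, `cₙ(λ) = c(λ)Hₙ`, `Λₙ = Λ ×_{cₙ} Gₙ` and coverings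
`pₙ(λ, g) = (λ, qₙ(g))`.  Then the tower `(k+1)`-graph `T = tgrphlim (Λₙ; pₙ)` is
cofinal if and only if each skew product `Λₙ` is cofinal. -/
theorem stmt13 {k : ℕ} {Λ : Type} [SmallCategory Λ] (KG : KGraph k Λ)
    [IsConnected Λ]
    (hrow : ∀ (v : Λ) (d : Fin k → ℕ), Finite ((b : Λ) × {f : v ⟶ b // KG.deg f = d}))
    (hns : ∀ (v : Λ) (d : Fin k → ℕ), ∃ (b : Λ) (f : v ⟶ b), KG.deg f = d)
    {G : Type} [Group G] (c : Cocycle Λ G)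
    (H : ℕ → Subgroup G) [∀ i, (H i).Normal] (hH : Antitone H)
    (hfin : ∀ i, (H i).FiniteIndex) (hH0 : H 0 = ⊤) :
    Cofinal (towerKG KG c hH) ↔ ∀ n : ℕ, Cofinal (skewKGraph KG (cq c (H n))) := by
  constructor
  · intro hT n v x
    obtain ⟨g0, hg0⟩ := QuotientGroup.mk_surjective (x.P.obj 0).grp
    obtain ⟨m, ⟨F⟩⟩ := hT ⟨n, v.base, v.grp⟩ (towerPath KG c hH n x g0)
    refine ⟨fun i => m i.castSucc, ⟨⟨F.val, ?_⟩⟩⟩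
    have h2 : (↑(c.c F.val) : G ⧸ H n) * qd hH n (n + m (Fin.last k))
        (((ghat KG c n x g0 (fun i => m i.castSucc) : G))
          : G ⧸ H (n + m (Fin.last k))) = v.grp := F.2.2
    rw [qd_eq hH (Nat.le_add_right n (m (Fin.last k))), quotDown_mk,
      ghat_mk KG c n x g0 hg0] at h2
    exact h2
  · intro hA W X
    obtain ⟨g, hg⟩ := QuotientGroup.mk_surjective W.grp
    have hWN : W.lvl ≤ (X.P.obj 0).lvl + W.lvl := Nat.le_add_left _ _
    obtain ⟨m, ⟨F⟩⟩ := hA ((X.P.obj 0).lvl + W.lvl)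
      ⟨W.vert, ((g : G) : G ⧸ H ((X.P.obj 0).lvl + W.lvl))⟩ (skewPath KG c hH X W.lvl)
    have hNm : (X.P.obj 0).lvl + W.lvl ≤ (X.P.obj (Fin.snoc m W.lvl)).lvl := by
      rw [tower_lvl KG c hH X (Fin.snoc m W.lvl), Fin.snoc_last]
    refine ⟨Fin.snoc m W.lvl, ⟨⟨F.val, hWN.trans hNm, ?_⟩⟩⟩
    have h2 : (↑(c.c F.val) : G ⧸ H ((X.P.obj 0).lvl + W.lvl)) *
        qd hH ((X.P.obj 0).lvl + W.lvl) (X.P.obj (Fin.snoc m W.lvl)).lvl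
          (X.P.obj (Fin.snoc m W.lvl)).grp = ↑g := F.2
    rw [qd_eq hH hNm] at h2
    have h3 := congrArg (quotDown hH hWN) h2
    rw [map_mul, quotDown_mk, quotDown_comp, quotDown_mk, hg] at h3
    rw [qd_eq hH (hWN.trans hNm)]
    exact h3
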